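/- Let D be a rayless, finitely separable, weakly connected digraph and let v, w be distinct vertices with v ∼ w. Then every inclusion-minimal witness for v ∼ w is finite and non-empty. -/

import Mathlib

/-- A digraph with vertex type `V` and edge type `E`, allowing parallel edges. -/
structure MultiDigraph (V : Type*) (E : Type*) where
  tail : E → V
  head : E → V

namespace MultiDigraph

variable {V : Type*} {E : Type*} (D : MultiDigraph V E)

/-- Adjacency in the underlying undirected multigraph. -/
def Adj (u v : V) : Prop :=
  ∃ e : E, (D.tail e = u ∧ D.head e = v) ∨ (D.tail e = v ∧ D.head e = u)

/-- The underlying undirected multigraph is connected. -/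
def WeaklyConnected : Prop :=
  ∀ u v : V, Relation.ReflTransGen D.Adj u v

/-- `B` is the dicut of `D` whose in-shore is `X` (every edge of the cut has its
head in `X`, and no edge leaves `X`). -/
def DicutWith (X : Set V) (B : Set E) : Prop :=
  (∀ e : E, D.tail e ∈ X → D.head e ∈ X) ∧
    B = {e : E | D.tail e ∉ X ∧ D.head e ∈ X}

/-- `B` is a dicut of `D`. -/
def IsDicut (B : Set E) : Prop :=
  ∃ X : Set V, D.DicutWith X B

/-- A dibond is a minimal non-empty dicut. -/
def IsDibond (B : Set E) : Prop :=
  D.IsDicut B ∧ B.Nonempty ∧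
    ∀ B' : Set E, D.IsDicut B' → B'.Nonempty → B' ⊆ B → B' = B

/-- A dijoin meets every non-empty dicut. -/
def Dijoin (F : Set E) : Prop :=
  ∀ B : Set E, D.IsDicut B → B.Nonempty → (F ∩ B).Nonempty

/-- A finitary dijoin meets every non-empty finite dicut. -/
def FinitaryDijoin (F : Set E) : Prop :=
  ∀ B : Set E, D.IsDicut B → B.Finite → B.Nonempty → (F ∩ B).Nonempty

/-- Two dicuts are nested if they have witnessing sides one of which is
`⊆`-comparable with a side of the other. -/
def NestedDicuts (B₁ B₂ : Set E) : Prop :=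
  ∃ X₁ X₂ : Set V, D.DicutWith X₁ B₁ ∧ D.DicutWith X₂ B₂ ∧
    (X₁ ⊆ X₂ ∨ X₂ ⊆ X₁ ∨ X₁ ⊆ X₂ᶜ ∨ X₂ᶜ ⊆ X₁)

/-- An optimal pair: a set `ℬ` of pairwise disjoint finite dicuts and a finitary
dijoin `F ⊆ ⋃ ℬ` meeting each member of `ℬ` in exactly one edge. -/
def OptimalPair (F : Set E) (ℬ : Set (Set E)) : Prop :=
  (∀ B ∈ ℬ, D.IsDicut B ∧ B.Finite) ∧
    ℬ.Pairwise Disjoint ∧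
    D.FinitaryDijoin F ∧
    F ⊆ ⋃₀ ℬ ∧
    ∀ B ∈ ℬ, (F ∩ B).ncard = 1

/-- A nested optimal pair. -/
def NestedOptimalPair (F : Set E) (ℬ : Set (Set E)) : Prop :=
  D.OptimalPair F ℬ ∧ ℬ.Pairwise D.NestedDicuts

/-- The underlying multigraph contains no ray. -/
def Rayless : Prop :=
  ¬ ∃ f : ℕ → V, Function.Injective f ∧ ∀ n : ℕ, D.Adj (f n) (f (n + 1))

/-- The (undirected) cut of `D` with side `X`: all edges with exactly one
endpoint in `X`. -/
def cutEdges (X : Set V) : Set E :=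
  {e : E | (D.tail e ∈ X ∧ D.head e ∉ X) ∨ (D.tail e ∉ X ∧ D.head e ∈ X)}

/-- Any two distinct vertices are separated by a finite cut. -/
def FinitelySeparable : Prop :=
  ∀ v w : V, v ≠ w → ∃ X : Set V, (D.cutEdges X).Finite ∧ v ∈ X ∧ w ∉ X

/-- Any two distinct vertices lie on different sides of some finite dicut. -/
def FinitelyDiseparable : Prop :=
  ∀ v w : V, v ≠ w → ∃ (X : Set V) (B : Set E), D.DicutWith X B ∧ B.Finite ∧
    ((v ∈ X ∧ w ∉ X) ∨ (v ∉ X ∧ w ∈ X))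

/-- The underlying multigraph is 2-connected: it is connected and deleting any
single vertex keeps it connected. -/
def UnderlyingTwoConnected : Prop :=
  D.WeaklyConnected ∧ ∀ x u v : V, u ≠ x → v ≠ x →
    Relation.ReflTransGen (fun a b => a ≠ x ∧ b ≠ x ∧ D.Adj a b) u v

/-- `v ∼ w`: no finite dicut of `D` separates `v` and `w`. -/
def Sim (v w : V) : Prop :=
  ∀ (X : Set V) (B : Set E), D.DicutWith X B → B.Finite → (v ∈ X ↔ w ∈ X)

/-- `W` is a witness for `v ∼ w`: it meets every finite cut separating `v`
and `w` in both directions. -/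
def Witness (v w : V) (W : Set E) : Prop :=
  ∀ X : Set V, (D.cutEdges X).Finite → v ∈ X → w ∉ X →
    (∃ e ∈ W, D.tail e ∈ X ∧ D.head e ∉ X) ∧
    (∃ e ∈ W, D.tail e ∉ X ∧ D.head e ∈ X)

end MultiDigraph

namespace MDAux

open MultiDigraph

variable {V E : Type*}

/-- `e` crosses `X` from inside to outside. -/
def Lv (D : MultiDigraph V E) (e : E) (X : Set V) : Prop :=
  D.tail e ∈ X ∧ D.head e ∉ X

/-- `X` is a side of a finite cut separating `v` from `w`. -/
def Sep (D : MultiDigraph V E) (v w : V) (X : Set V) : Prop :=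
  (D.cutEdges X).Finite ∧ v ∈ X ∧ w ∉ X

/-- `F` contains, for every finite cut separating `v` from `w`, an edge
leaving the `v`-side. -/
def Fwd (D : MultiDigraph V E) (v w : V) (F : Set E) : Prop :=
  ∀ X : Set V, Sep D v w X → ∃ e ∈ F, Lv D e X

/-- `X` certifies that `e` is essential in `F`: `e` is the unique edge of `F`
leaving `X`. -/
def Cert (D : MultiDigraph V E) (v w : V) (F : Set E) (e : E) (X : Set V) : Prop :=
  Sep D v w X ∧ e ∈ F ∧ Lv D e X ∧ ∀ g ∈ F, Lv D g X → g = e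

def Prec (D : MultiDigraph V E) (v w : V) (F : Set E) (e f : E) : Prop :=
  ∃ X Y : Set V, Cert D v w F e X ∧ Cert D v w F f Y ∧ X ⊆ Y

variable {D : MultiDigraph V E} {v w : V} {F : Set E}

lemma lv_mem_cutEdges {e : E} {X : Set V} (h : Lv D e X) : e ∈ D.cutEdges X :=
  Or.inl h

lemma adj_of_edge (D : MultiDigraph V E) (e : E) : D.Adj (D.tail e) (D.head e) :=
  ⟨e, Or.inl ⟨rfl, rfl⟩⟩

lemma adj_symm {u u' : V} (h : D.Adj u u') : D.Adj u' u := by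
  obtain ⟨e, h | h⟩ := h
  · exact ⟨e, Or.inr h⟩
  · exact ⟨e, Or.inl h⟩

lemma cutEdges_inter_subset (X Y : Set V) :
    D.cutEdges (X ∩ Y) ⊆ D.cutEdges X ∪ D.cutEdges Y := by
  intro e he
  simp only [cutEdges, Set.mem_setOf_eq, Set.mem_inter_iff, Set.mem_union] at *
  tauto

lemma cutEdges_union_subset (X Y : Set V) :
    D.cutEdges (X ∪ Y) ⊆ D.cutEdges X ∪ D.cutEdges Y := by
  intro e he
  simp only [cutEdges, Set.mem_setOf_eq, Set.mem_union] at *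
  tauto

lemma Sep.inter {X Y : Set V} (hX : Sep D v w X) (hY : Sep D v w Y) :
    Sep D v w (X ∩ Y) :=
  ⟨((hX.1.union hY.1).subset (cutEdges_inter_subset X Y)), ⟨hX.2.1, hY.2.1⟩,
    fun h => hX.2.2 h.1⟩

lemma Sep.union {X Y : Set V} (hX : Sep D v w X) (hY : Sep D v w Y) :
    Sep D v w (X ∪ Y) :=
  ⟨((hX.1.union hY.1).subset (cutEdges_union_subset X Y)), Or.inl hX.2.1,
    fun h => h.elim hX.2.2 hY.2.2⟩

lemma cert_exists (hF : Fwd D v w F)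
    (hmin : ∀ F' ⊆ F, Fwd D v w F' → F' = F) {e : E} (he : e ∈ F) :
    ∃ X : Set V, Cert D v w F e X := by
  have hne : F \ {e} ≠ F := by
    intro h
    have : e ∈ F \ {e} := h.symm ▸ he
    exact this.2 rfl
  have hnf : ¬ Fwd D v w (F \ {e}) := fun h => hne (hmin _ Set.diff_subset h)
  simp only [Fwd, not_forall] at hnf
  obtain ⟨X, hXsep, hX⟩ := hnf
  push_neg at hX
  refine ⟨X, hXsep, he, ?_, ?_⟩
  · obtain ⟨g, hgF, hglv⟩ := hF X hXsep
    have : g = e := by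
      by_contra hge
      exact hX g ⟨hgF, hge⟩ hglv
    exact this ▸ hglv
  · intro g hgF hglv
    by_contra hge
    exact hX g ⟨hgF, hge⟩ hglv

/-- The uncrossing lemma: two certificates of distinct edges uncross into
certificates of the corner cuts. -/
lemma corner (hF : Fwd D v w F) {e f : E} {X Y : Set V}
    (hX : Cert D v w F e X) (hY : Cert D v w F f Y) (hef : e ≠ f) :
    (Cert D v w F e (X ∩ Y) ∧ Cert D v w F f (X ∪ Y)) ∨
      (Cert D v w F f (X ∩ Y) ∧ Cert D v w F e (X ∪ Y)) := by
  obtain ⟨hXsep, heF, ⟨hte, hhe⟩, hXuniq⟩ := hX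
  obtain ⟨hYsep, hfF, ⟨htf, hhf⟩, hYuniq⟩ := hY
  have hsepI : Sep D v w (X ∩ Y) := hXsep.inter hYsep
  have hsepU : Sep D v w (X ∪ Y) := hXsep.union hYsep
  -- any edge of F leaving X ∩ Y is e or f
  have claim1 : ∀ g ∈ F, Lv D g (X ∩ Y) → g = e ∨ g = f := by
    rintro g hg ⟨⟨hgX, hgY⟩, hgh⟩
    rw [Set.mem_inter_iff, not_and_or] at hgh
    rcases hgh with h | h
    · exact Or.inl (hXuniq g hg ⟨hgX, h⟩)
    · exact Or.inr (hYuniq g hg ⟨hgY, h⟩)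
  have claim2 : ∀ g ∈ F, Lv D g (X ∪ Y) → g = e ∨ g = f := by
    rintro g hg ⟨hgt, hgh⟩
    rw [Set.mem_union] at hgt
    have hghX : D.head g ∉ X := fun h => hgh (Or.inl h)
    have hghY : D.head g ∉ Y := fun h => hgh (Or.inr h)
    rcases hgt with h | h
    · exact Or.inl (hXuniq g hg ⟨h, hghX⟩)
    · exact Or.inr (hYuniq g hg ⟨h, hghY⟩)
  -- e does not leave Y, f does not leave X
  have heY : D.tail e ∈ Y → D.head e ∈ Y := by
    intro h
    by_contra hh
    exact hef (hYuniq e heF ⟨h, hh⟩)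
  have hfX : D.tail f ∈ X → D.head f ∈ X := by
    intro h
    by_contra hh
    exact hef (hXuniq f hfF ⟨h, hh⟩).symm
  by_cases hteY : D.tail e ∈ Y
  · -- e leaves X ∩ Y, and head e ∈ Y so e does not leave X ∪ Y;
    -- hence f leaves X ∪ Y (so head f ∉ X), hence f does not leave X ∩ Y
    have hheY : D.head e ∈ Y := heY hteY
    have hlveI : Lv D e (X ∩ Y) := ⟨⟨hte, hteY⟩, fun h => hhe h.1⟩
    -- f must be the edge leaving the union
    obtain ⟨g, hgF, hglv⟩ := hF _ hsepU
    have hgf : g = f := by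
      rcases claim2 g hgF hglv with h | h
      · exfalso; rw [h] at hglv; exact hglv.2 (Or.inr hheY)
      · exact h
    rw [hgf] at hglv
    have hhfX : D.head f ∉ X := fun h => hglv.2 (Or.inl h)
    refine Or.inl ⟨⟨hsepI, heF, hlveI, ?_⟩, ⟨hsepU, hfF, hglv, ?_⟩⟩
    · intro g hg hglv'
      rcases claim1 g hg hglv' with h | h
      · exact h
      · exfalso
        rw [h] at hglv'
        exact hhfX (hfX hglv'.1.1)
    · intro g hg hglv'
      rcases claim2 g hg hglv' with h | h
      · exfalso
        rw [h] at hglv'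
        exact hglv'.2 (Or.inr hheY)
      · exact h
  · -- e does not leave X ∩ Y, so f does; then e leaves X ∪ Y
    obtain ⟨g, hgF, hglv⟩ := hF _ hsepI
    have hgf : g = f := by
      rcases claim1 g hgF hglv with h | h
      · exfalso; rw [h] at hglv; exact hteY hglv.1.2
      · exact h
    rw [hgf] at hglv
    have hhfX : D.head f ∈ X := hfX hglv.1.1
    obtain ⟨g', hg'F, hg'lv⟩ := hF _ hsepU
    have hg'e : g' = e := by
      rcases claim2 g' hg'F hg'lv with h | h
      · exact h
      · exfalso; rw [h] at hg'lv; exact hg'lv.2 (Or.inl hhfX)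
    rw [hg'e] at hg'lv
    refine Or.inr ⟨⟨hsepI, hfF, hglv, ?_⟩, ⟨hsepU, heF, hg'lv, ?_⟩⟩
    · intro g'' hg'' hglv''
      rcases claim1 g'' hg'' hglv'' with h | h
      · exfalso; rw [h] at hglv''; exact hteY hglv''.1.2
      · exact h
    · intro g'' hg'' hglv''
      rcases claim2 g'' hg'' hglv'' with h | h
      · exact h
      · exfalso; rw [h] at hglv''; exact hglv''.2 (Or.inl hhfX)

end MDAux

namespace MDAux

open MultiDigraph

variable {V E : Type*} {D : MultiDigraph V E} {v w : V} {F : Set E}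

/-- Every other edge of `F` is entirely inside or entirely outside a
certificate. -/
lemma dichotomy (hF : Fwd D v w F)
    (hmin : ∀ F' ⊆ F, Fwd D v w F' → F' = F) {e f : E} {X : Set V}
    (hX : Cert D v w F e X) (hfF : f ∈ F) (hfe : f ≠ e) :
    (D.tail f ∈ X ∧ D.head f ∈ X) ∨ (D.tail f ∉ X ∧ D.head f ∉ X) := by
  obtain ⟨Y, hY⟩ := cert_exists hF hmin hfF
  have hnlv : ¬ Lv D f X := fun h => hfe (hX.2.2.2 f hfF h)
  rcases corner hF hX hY (Ne.symm hfe) with ⟨h1, h2⟩ | ⟨h1, h2⟩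
  · -- f leaves X ∪ Y : head f ∉ X, so tail f ∉ X
    have hh : D.head f ∉ X := fun h => h2.2.2.1.2 (Or.inl h)
    refine Or.inr ⟨fun ht => ?_, hh⟩
    exact (not_and.mp hnlv ht) hh
  · -- f leaves X ∩ Y : tail f ∈ X, so head f ∈ X
    have ht : D.tail f ∈ X := h1.2.2.1.1.1
    have hh : D.head f ∈ X := by
      by_contra hh
      exact hnlv ⟨ht, hh⟩
    exact Or.inl ⟨ht, hh⟩

lemma prec_total (hF : Fwd D v w F)
    (hmin : ∀ F' ⊆ F, Fwd D v w F' → F' = F) {e f : E}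
    (he : e ∈ F) (hf : f ∈ F) (hef : e ≠ f) :
    Prec D v w F e f ∨ Prec D v w F f e := by
  obtain ⟨X, hX⟩ := cert_exists hF hmin he
  obtain ⟨Y, hY⟩ := cert_exists hF hmin hf
  rcases corner hF hX hY hef with ⟨h1, h2⟩ | ⟨h1, h2⟩
  · exact Or.inl ⟨X ∩ Y, X ∪ Y, h1, h2, Set.inter_subset_left.trans Set.subset_union_left⟩
  · exact Or.inr ⟨X ∩ Y, X ∪ Y, h1, h2, Set.inter_subset_left.trans Set.subset_union_left⟩

lemma prec_antisymm (hF : Fwd D v w F)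
    (hmin : ∀ F' ⊆ F, Fwd D v w F' → F' = F) {e f : E} (hef : e ≠ f)
    (h1 : Prec D v w F e f) (h2 : Prec D v w F f e) : False := by
  obtain ⟨X, Y, hX, hY, hXY⟩ := h1
  obtain ⟨X', Y', hX', hY', hXY'⟩ := h2
  -- head e ∈ Y and head f ∈ Y'
  have hheY : D.head e ∈ Y := by
    rcases dichotomy hF hmin hY hX.2.1 hef with h | h
    · exact h.2
    · exact absurd (hXY hX.2.2.1.1) h.1
  have hhfY' : D.head f ∈ Y' := by
    rcases dichotomy hF hmin hY' hX'.2.1 (Ne.symm hef) with h | h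
    · exact h.2
    · exact absurd (hXY' hX'.2.2.1.1) h.1
  rcases corner hF hY hY' (Ne.symm hef) with ⟨_, h2⟩ | ⟨_, h2⟩
  · exact h2.2.2.1.2 (Or.inl hheY)
  · exact h2.2.2.1.2 (Or.inr hhfY')

lemma step_up (hF : Fwd D v w F)
    (hmin : ∀ F' ⊆ F, Fwd D v w F' → F' = F) {e f : E} {X : Set V}
    (hX : Cert D v w F e X) (hp : Prec D v w F e f) (hef : e ≠ f) :
    ∃ Y : Set V, Cert D v w F f Y ∧ X ⊆ Y := by
  obtain ⟨A, B, _, hB, _⟩ := id hp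
  rcases corner hF hX hB hef with ⟨h1, h2⟩ | ⟨h1, h2⟩
  · exact ⟨X ∪ B, h2, Set.subset_union_left⟩
  · exfalso
    exact prec_antisymm hF hmin hef hp
      ⟨X ∩ B, X ∪ B, h1, h2, Set.inter_subset_left.trans Set.subset_union_left⟩

lemma step_down (hF : Fwd D v w F)
    (hmin : ∀ F' ⊆ F, Fwd D v w F' → F' = F) {e f : E} {X : Set V}
    (hX : Cert D v w F e X) (hp : Prec D v w F f e) (hfe : f ≠ e) :
    ∃ Y : Set V, Cert D v w F f Y ∧ Y ⊆ X := by
  obtain ⟨A, B, hA, _, _⟩ := id hp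
  rcases corner hF hA hX hfe with ⟨h1, h2⟩ | ⟨h1, h2⟩
  · exact ⟨A ∩ X, h1, Set.inter_subset_right⟩
  · exfalso
    exact prec_antisymm hF hmin (Ne.symm hfe)
      ⟨A ∩ X, A ∪ X, h1, h2, Set.inter_subset_left.trans Set.subset_union_left⟩ hp

/-- The linking lemma: for nested certificates `X ⊆ Y` of `e` and `f`, the
head of `e` is connected to the tail of `f` inside the annulus `Y \ X`. -/
lemma link (hF : Fwd D v w F)
    (hmin : ∀ F' ⊆ F, Fwd D v w F' → F' = F) {e f : E} {X Y : Set V}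
    (hX : Cert D v w F e X) (hY : Cert D v w F f Y) (hef : e ≠ f)
    (hXY : X ⊆ Y) :
    Relation.ReflTransGen
      (fun x y => x ∈ Y \ X ∧ y ∈ Y \ X ∧ D.Adj x y) (D.tail f) (D.head e) := by
  set r : V → V → Prop := fun x y => x ∈ Y \ X ∧ y ∈ Y \ X ∧ D.Adj x y with hr
  have hrsymm : Symmetric r := fun x y ⟨h1, h2, h3⟩ => ⟨h2, h1, adj_symm h3⟩
  -- the component K of tail f in the annulus
  set K : Set V := {z | Relation.ReflTransGen r (D.tail f) z ∧ z ∈ Y \ X} with hK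
  have htfB : D.tail f ∈ Y \ X := by
    refine ⟨hY.2.2.1.1, fun h => ?_⟩
    rcases dichotomy hF hmin hX hY.2.1 (Ne.symm hef) with hd | hd
    · exact hY.2.2.1.2 (hXY hd.2)
    · exact hd.1 h
  have htfK : D.tail f ∈ K := ⟨Relation.ReflTransGen.refl, htfB⟩
  have hKB : K ⊆ Y \ X := fun z hz => hz.2
  -- closure of K under adjacency within the annulus
  have hKclosed : ∀ x y, x ∈ K → y ∈ Y \ X → D.Adj x y → y ∈ K := by
    intro x y hx hy hadj
    exact ⟨hx.1.tail ⟨hx.2, hy, hadj⟩, hy⟩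
  have hheY : D.head e ∈ Y := by
    rcases dichotomy hF hmin hY hX.2.1 hef with h | h
    · exact h.2
    · exact absurd (hXY hX.2.2.1.1) h.1
  -- the modified cut Y \ K
  have hXsub : X ⊆ Y \ K := fun x hx => ⟨hXY hx, fun hk => (hKB hk).2 hx⟩
  have hsep : Sep D v w (Y \ K) := by
    refine ⟨?_, hXsub hX.1.2.1, fun h => hY.1.2.2 h.1⟩
    refine ((hX.1.1.union hY.1.1).subset ?_)
    intro g hg
    rcases hg with ⟨hgt, hgh⟩ | ⟨hgt, hgh⟩
    · -- tail in Y \ K, head not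
      by_cases hhY : D.head g ∈ Y
      · -- head ∈ K; so tail ∈ X (else tail would be in K)
        have hhK : D.head g ∈ K := by
          by_contra hcon
          exact hgh ⟨hhY, hcon⟩
        have htX : D.tail g ∈ X := by
          by_contra hcon
          have : D.tail g ∈ K :=
            hKclosed _ _ hhK ⟨hgt.1, hcon⟩ (adj_symm (adj_of_edge D g))
          exact hgt.2 this
        exact Or.inl (Or.inl ⟨htX, fun h => (hKB hhK).2 h⟩)
      · exact Or.inr (Or.inl ⟨hgt.1, hhY⟩)
    · by_cases htY : D.tail g ∈ Y
      · have htK : D.tail g ∈ K := by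
          by_contra hcon
          exact hgt ⟨htY, hcon⟩
        have hhX : D.head g ∈ X := by
          by_contra hcon
          have : D.head g ∈ K := hKclosed _ _ htK ⟨hgh.1, hcon⟩ (adj_of_edge D g)
          exact hgh.2 this
        exact Or.inl (Or.inr ⟨fun h => (hKB htK).2 h, hhX⟩)
      · exact Or.inr (Or.inr ⟨htY, hgh.1⟩)
  -- some edge of F leaves Y \ K; it must be e, whence head e ∈ K
  obtain ⟨g, hgF, hglv⟩ := hF _ hsep
  have hge : g = e := by
    by_cases hgf : g = f
    · exfalso
      rw [hgf] at hglv
      exact hglv.1.2 htfK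
    by_contra hgne
    rcases dichotomy hF hmin hX hgF hgne with hd | hd
    · exact hglv.2 (hXsub hd.2)
    · -- g is outside X; look at it relative to Y
      rcases dichotomy hF hmin hY hgF hgf with hd2 | hd2
      · -- both ends in Y: tail g ∈ annulus \ K, head g ∈ K: contradiction
        have hhgK : D.head g ∈ K := by
          by_contra hcon
          exact hglv.2 ⟨hd2.2, hcon⟩
        have : D.tail g ∈ K :=
          hKclosed _ _ hhgK ⟨hglv.1.1, hd.1⟩ (adj_symm (adj_of_edge D g))
        exact hglv.1.2 this
      · exact hd2.1 hglv.1.1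
  rw [hge] at hglv
  have hheK : D.head e ∈ K := by
    by_contra hcon
    exact hglv.2 ⟨hheY, hcon⟩
  exact hheK.1

end MDAux

namespace MDAux

open MultiDigraph List

variable {V E : Type*} {D : MultiDigraph V E}

lemma chain_append_last {α : Type*} {r : α → α → Prop} :
    ∀ {a : α} {l : List α}, List.Chain r a l → ∀ {c : α},
      r ((a :: l).getLast (List.cons_ne_nil _ _)) c → List.Chain r a (l ++ [c])
  | a, [], _, c, hc => List.chain_cons.mpr ⟨hc, List.Chain.nil⟩
  | a, x :: l, h, c, hc => by
    replace h : List.IsChain r (a :: x :: l) := h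
    rw [List.chain_cons] at h
    refine List.chain_cons.mpr ⟨h.1, chain_append_last h.2 ?_⟩
    rwa [List.getLast_cons (List.cons_ne_nil _ _)] at hc

lemma exists_nodup_chain {α : Type*} {r : α → α → Prop} {a b : α}
    (h : Relation.ReflTransGen r a b) :
    ∃ l : List α, List.Chain r a l ∧
      (a :: l).getLast (List.cons_ne_nil _ _) = b ∧ (a :: l).Nodup := by
  induction h with
  | refl => exact ⟨[], List.Chain.nil, rfl, List.nodup_singleton a⟩
  | @tail b c hab hbc ih =>
    obtain ⟨l, hchain, hlast, hnodup⟩ := ih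
    by_cases hc : c ∈ a :: l
    · rcases List.mem_cons.mp hc with h | h
      · exact ⟨[], List.Chain.nil, h.symm, List.nodup_singleton a⟩
      · obtain ⟨s, t, rfl⟩ := List.append_of_mem h
        refine ⟨s ++ [c], (List.isChain_split (l₁ := a :: s).mp hchain).1, ?_, ?_⟩
        · simp
        · have hsub : a :: (s ++ [c]) <+ a :: (s ++ c :: t) := by
            refine List.Sublist.cons₂ _ (List.Sublist.append_left ?_ _)
            exact (List.nil_sublist t).cons₂ _
          exact hnodup.sublist hsub
    · refine ⟨l ++ [c], chain_append_last hchain (hlast ▸ hbc), ?_, ?_⟩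
      · simp
      · have : a :: (l ++ [c]) = (a :: l) ++ [c] := by simp
        rw [this]
        exact List.Nodup.append hnodup (List.nodup_singleton c)
          (by intro x hx hx'; rw [List.mem_singleton] at hx'; subst hx'; exact hc hx)

end MDAux

namespace MDAux

open MultiDigraph List

variable {V E : Type*} {D : MultiDigraph V E}

lemma chain_mem_of_restricted {s : Set V} {A : V → V → Prop} :
    ∀ {a : V} {l : List V},
      List.Chain (fun x y => x ∈ s ∧ y ∈ s ∧ A x y) a l → a ∈ s →
      ∀ x ∈ a :: l, x ∈ s
  | _, [], _, hx, x, hmem => by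
    rw [List.mem_singleton] at hmem; exact hmem ▸ hx
  | a, c :: l, h, hx, x, hmem => by
    replace h : List.IsChain (fun x y => x ∈ s ∧ y ∈ s ∧ A x y) (a :: c :: l) := h
    rw [List.chain_cons] at h
    rcases List.mem_cons.mp hmem with rfl | hmem'
    · exact hx
    · exact chain_mem_of_restricted h.2 h.1.2.1 x hmem'

lemma get_congr_pair {α : Type*} {l l' : List α} (h : l = l') {i i' : ℕ}
    (hi : i < l.length) (hi' : i' < l'.length) (hii' : i = i') :
    l.get ⟨i, hi⟩ = l'.get ⟨i', hi'⟩ := by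
  subst h; subst hii'; rfl

lemma ray_of_bands (S : ℕ → Set V) (hdisj : ∀ m n, m ≠ n → Disjoint (S m) (S n))
    (a b : ℕ → V) (ha : ∀ n, a n ∈ S n) (hb : ∀ n, b n ∈ S n)
    (hconn : ∀ n, Relation.ReflTransGen
      (fun x y => x ∈ S n ∧ y ∈ S n ∧ D.Adj x y) (a n) (b n))
    (hstep : ∀ n, D.Adj (b n) (a (n + 1))) :
    ∃ f : ℕ → V, Function.Injective f ∧ ∀ n : ℕ, D.Adj (f n) (f (n + 1)) := by
  classical
  choose l hl1 hl2 hl3 using fun n => exists_nodup_chain (hconn n)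
  set P : ℕ → List V := fun n => a n :: l n with hPdef
  have hlen : ∀ n, 0 < (P n).length := fun n => by simp [hPdef]
  have hmemS : ∀ n, ∀ x ∈ P n, x ∈ S n :=
    fun n => chain_mem_of_restricted (hl1 n) (ha n)
  have hchain : ∀ n, List.Chain' D.Adj (P n) :=
    fun n => List.Chain.imp (fun x y h => h.2.2) (hl1 n)
  have hl2' : ∀ n, (P n).getLast (List.cons_ne_nil _ _) = b n := hl2
  have hl3' : ∀ n, (P n).Nodup := hl3
  -- the positions of the ray: (band, index in band)
  set pos : ℕ → ℕ × ℕ := fun k => Nat.rec (0, 0)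
    (fun _ p => if p.2 + 1 < (P p.1).length then (p.1, p.2 + 1) else (p.1 + 1, 0)) k
    with hposdef
  have hposs : ∀ k, pos (k + 1) =
      if (pos k).2 + 1 < (P (pos k).1).length then ((pos k).1, (pos k).2 + 1)
      else ((pos k).1 + 1, 0) := fun k => rfl
  have hinv : ∀ k, (pos k).2 < (P (pos k).1).length := by
    intro k
    induction k with
    | zero => exact hlen 0
    | succ k ih =>
      rw [hposs k]
      split
      · simpa using ‹(pos k).2 + 1 < (P (pos k).1).length›
      · simpa using hlen ((pos k).1 + 1)
  set f : ℕ → V := fun k => (P (pos k).1).getD (pos k).2 (a 0) with hfdef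
  have hfval : ∀ k, f k = (P (pos k).1).get ⟨(pos k).2, hinv k⟩ :=
    fun k => List.getD_eq_getElem _ _ (hinv k)
  -- cumulative length
  set csum : ℕ → ℕ := fun n => Nat.rec 0 (fun m acc => acc + (P m).length) n
    with hcsumdef
  have hcsums : ∀ n, csum (n + 1) = csum n + (P n).length := fun n => rfl
  have hT : ∀ k, csum (pos k).1 + (pos k).2 = k := by
    intro k
    induction k with
    | zero => rfl
    | succ k ih =>
      rw [hposs k]
      split
      · simpa using by omega
      · rename_i hnot
        have hlt := hinv k
        have heq : (P (pos k).1).length = (pos k).2 + 1 := by omega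
        simp only [hcsums, heq]
        omega
  -- injectivity
  have hfmem : ∀ k, f k ∈ S (pos k).1 := by
    intro k
    rw [hfval k]
    exact hmemS _ _ (List.get_mem _ _)
  have hinj : Function.Injective f := by
    intro k k' hkk'
    have hband : (pos k).1 = (pos k').1 := by
      by_contra hne
      exact Set.disjoint_left.mp (hdisj _ _ hne) (hfmem k) (hkk' ▸ hfmem k')
    have h3 : (P (pos k').1).get ⟨(pos k').2, hinv k'⟩
        = (P (pos k).1).get ⟨(pos k').2, by rw [hband]; exact hinv k'⟩ :=
      get_congr_pair (congrArg P hband.symm) _ _ rfl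
    rw [hfval k, hfval k', h3] at hkk'
    have hfin := ((hl3' (pos k).1).get_inj_iff).mp hkk'
    have hidx : (pos k).2 = (pos k').2 := congrArg Fin.val hfin
    have hTk := hT k
    rw [hband, hidx, hT k'] at hTk
    exact hTk.symm
  -- adjacency
  refine ⟨f, hinj, ?_⟩
  intro k
  rw [hfval k, hfval (k + 1)]
  by_cases h : (pos k).2 + 1 < (P (pos k).1).length
  · have hpk : pos (k + 1) = ((pos k).1, (pos k).2 + 1) := by rw [hposs k, if_pos h]
    have h4 : (P (pos (k + 1)).1).get ⟨(pos (k + 1)).2, hinv (k + 1)⟩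
        = (P (pos k).1).get ⟨(pos k).2 + 1, h⟩ :=
      get_congr_pair (by rw [hpk]) _ _ (by rw [hpk])
    rw [h4]
    exact List.isChain_iff_getElem.mp (hchain (pos k).1) (pos k).2 (by omega)
  · have hpk : pos (k + 1) = ((pos k).1 + 1, 0) := by rw [hposs k, if_neg h]
    have hlast : (P (pos k).1).get ⟨(pos k).2, hinv k⟩ = b (pos k).1 := by
      have h2 := hl2' (pos k).1
      rw [List.getLast_eq_getElem] at h2
      rw [← h2]
      exact get_congr_pair rfl _ _ (by have := hinv k; omega)
    have hhead : (P (pos (k + 1)).1).get ⟨(pos (k + 1)).2, hinv (k + 1)⟩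
        = (P ((pos k).1 + 1)).get ⟨0, hlen _⟩ :=
      get_congr_pair (by rw [hpk]) _ _ (by rw [hpk])
    rw [hlast, hhead]
    have : (P ((pos k).1 + 1)).get ⟨0, hlen _⟩ = a ((pos k).1 + 1) := rfl
    rw [this]
    exact hstep (pos k).1

end MDAux

namespace MDAux

open MultiDigraph

variable {V E : Type*} {D : MultiDigraph V E}

lemma nat_inf_gt {s : Set ℕ} (h : s.Infinite) (N : ℕ) : ∃ m ∈ s, N < m := by
  by_contra hcon
  push_neg at hcon
  exact h ((Set.finite_Iic N).subset (fun x hx => hcon x hx))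

/-- From an infinite set that is totally ordered by `R`, extract an `R`-ascending or
`R`-descending sequence (the "peaks" argument). -/
lemma exists_mono_seq {α : Type*} (R : α → α → Prop) (s : Set α) (hs : s.Infinite)
    (htot : ∀ e ∈ s, ∀ f ∈ s, e ≠ f → R e f ∨ R f e) :
    ∃ g : ℕ → α, (∀ n, g n ∈ s) ∧ (∀ n, g n ≠ g (n + 1)) ∧
      ((∀ n, R (g n) (g (n + 1))) ∨ (∀ n, R (g (n + 1)) (g n))) := by
  classical
  set c : ℕ ↪ ↥s := hs.natEmbedding with hc
  set cc : ℕ → α := fun k => (c k : α) with hccdef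
  have hcc_mem : ∀ k, cc k ∈ s := fun k => (c k).2
  have hcc_inj : Function.Injective cc := fun k k' h =>
    c.injective (Subtype.coe_injective h)
  set P : Set ℕ := {n | ∀ m, n < m → R (cc m) (cc n)} with hPdef
  by_cases hP : P.Infinite
  · -- infinitely many peaks: descending sequence
    have hgt : ∀ N : ℕ, ∃ m, m ∈ P ∧ N < m := by
      intro N
      obtain ⟨m, hm, hNm⟩ := nat_inf_gt hP N
      exact ⟨m, hm, hNm⟩
    set φ : ℕ → ℕ := fun k => Nat.rec (hgt 0).choose (fun _ n => (hgt n).choose) k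
      with hφdef
    have hφP : ∀ k, φ k ∈ P := by
      intro k
      cases k with
      | zero => exact (hgt 0).choose_spec.1
      | succ k => exact (hgt (φ k)).choose_spec.1
    have hφmono : ∀ k, φ k < φ (k + 1) := fun k => (hgt (φ k)).choose_spec.2
    refine ⟨fun k => cc (φ k), fun k => hcc_mem _, ?_, Or.inr ?_⟩
    · intro k h
      exact Nat.ne_of_lt (hφmono k) (hcc_inj h)
    · intro k
      exact hφP k _ (hφmono k)
  · -- finitely many peaks: ascending sequence
    rw [Set.not_infinite] at hP
    obtain ⟨N, hN⟩ := hP.bddAbove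
    have hstep : ∀ n, N < n → ∃ m, n < m ∧ N < m ∧ R (cc n) (cc m) := by
      intro n hn
      have hnP : n ∉ P := fun h => absurd (hN h) (by omega)
      rw [hPdef, Set.mem_setOf_eq] at hnP
      push_neg at hnP
      obtain ⟨m, hm1, hm2⟩ := hnP
      have hne : cc n ≠ cc m := fun h => Nat.ne_of_lt hm1 (hcc_inj h)
      have := htot _ (hcc_mem n) _ (hcc_mem m) hne
      exact ⟨m, hm1, by omega, this.resolve_right hm2⟩
    set ψ : ℕ → {n : ℕ // N < n} := fun k => Nat.rec ⟨N + 1, Nat.lt_succ_self N⟩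
      (fun _ p => ⟨(hstep p.1 p.2).choose, (hstep p.1 p.2).choose_spec.2.1⟩) k
      with hψdef
    have hψlt : ∀ k, (ψ k).1 < (ψ (k + 1)).1 :=
      fun k => (hstep (ψ k).1 (ψ k).2).choose_spec.1
    have hψR : ∀ k, R (cc (ψ k).1) (cc (ψ (k + 1)).1) :=
      fun k => (hstep (ψ k).1 (ψ k).2).choose_spec.2.2
    refine ⟨fun k => cc (ψ k).1, fun k => hcc_mem _, ?_, Or.inl hψR⟩
    intro k h
    exact Nat.ne_of_lt (hψlt k) (hcc_inj h)

/-- A minimal forward connector in a rayless digraph is finite. -/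
lemma fwd_min_finite (hray : D.Rayless) {v w : V} {F : Set E}
    (hF : Fwd D v w F) (hmin : ∀ F' ⊆ F, Fwd D v w F' → F' = F) : F.Finite := by
  by_contra hinf
  rw [← Set.not_infinite, not_not] at hinf
  obtain ⟨e, he_mem, he_ne, hdir⟩ := exists_mono_seq (Prec D v w F) F hinf
    (fun a ha b hb hab => prec_total hF hmin ha hb hab)
  apply hray
  have hrsymm : ∀ s : Set V, Symmetric (fun x y => x ∈ s ∧ y ∈ s ∧ D.Adj x y) :=
    fun s x y ⟨h1, h2, h3⟩ => ⟨h2, h1, adj_symm h3⟩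
  rcases hdir with hasc | hdesc
  · -- ascending chain
    have h0 : ∃ X, Cert D v w F (e 0) X := cert_exists hF hmin (he_mem 0)
    set XX : ∀ n : ℕ, {X : Set V // Cert D v w F (e n) X} := fun n =>
      Nat.rec ⟨h0.choose, h0.choose_spec⟩
        (fun n p => ⟨(step_up hF hmin p.2 (hasc n) (he_ne n)).choose,
          (step_up hF hmin p.2 (hasc n) (he_ne n)).choose_spec.1⟩) n with hXXdef
    set X : ℕ → Set V := fun n => (XX n).1 with hXdef
    have hcert : ∀ n, Cert D v w F (e n) (X n) := fun n => (XX n).2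
    have hsub : ∀ n, X n ⊆ X (n + 1) :=
      fun n => (step_up hF hmin (XX n).2 (hasc n) (he_ne n)).choose_spec.2
    have hmono : ∀ m n, m ≤ n → X m ⊆ X n := by
      intro m n hmn
      induction n with
      | zero => rw [Nat.le_zero.mp hmn]
      | succ n ih =>
        rcases Nat.lt_or_ge m (n + 1) with h | h
        · exact (ih (by omega)).trans (hsub n)
        · rw [Nat.le_antisymm hmn h]
    refine ray_of_bands (fun n => X (n + 1) \ X n) ?_
      (fun n => D.head (e n)) (fun n => D.tail (e (n + 1))) ?_ ?_ ?_ ?_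
    · -- disjoint bands
      intro m n hmn
      rcases Nat.lt_or_ge m n with h | h
      · exact Set.disjoint_left.mpr fun x hx hx' => hx'.2 (hmono _ _ h hx.1)
      · have h' : n < m := by omega
        exact Set.disjoint_left.mpr fun x hx hx' => hx.2 (hmono _ _ h' hx'.1)
    · -- a n ∈ band n
      intro n
      refine ⟨?_, (hcert n).2.2.1.2⟩
      rcases dichotomy hF hmin (hcert (n + 1)) (he_mem n) (he_ne n) with h | h
      · exact h.2
      · exact absurd (hsub n (hcert n).2.2.1.1) h.1
    · -- b n ∈ band n
      intro n
      refine ⟨(hcert (n + 1)).2.2.1.1, ?_⟩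
      rcases dichotomy hF hmin (hcert n) (he_mem (n + 1)) (Ne.symm (he_ne n)) with h | h
      · exact absurd (hsub n h.2) (hcert (n + 1)).2.2.1.2
      · exact h.1
    · -- connectivity inside bands
      intro n
      exact (@Relation.ReflTransGen.stdSymm _ _ ⟨fun _ _ h => hrsymm _ h⟩).symm _ _
        (link hF hmin (hcert n) (hcert (n + 1)) (he_ne n) (hsub n))
    · -- junction edges
      intro n
      exact adj_of_edge D (e (n + 1))
  · -- descending chain
    have h0 : ∃ X, Cert D v w F (e 0) X := cert_exists hF hmin (he_mem 0)
    set XX : ∀ n : ℕ, {X : Set V // Cert D v w F (e n) X} := fun n =>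
      Nat.rec ⟨h0.choose, h0.choose_spec⟩
        (fun n p => ⟨(step_down hF hmin p.2 (hdesc n) (Ne.symm (he_ne n))).choose,
          (step_down hF hmin p.2 (hdesc n) (Ne.symm (he_ne n))).choose_spec.1⟩) n
      with hXXdef
    set X : ℕ → Set V := fun n => (XX n).1 with hXdef
    have hcert : ∀ n, Cert D v w F (e n) (X n) := fun n => (XX n).2
    have hsub : ∀ n, X (n + 1) ⊆ X n :=
      fun n => (step_down hF hmin (XX n).2 (hdesc n) (Ne.symm (he_ne n))).choose_spec.2
    have hmono : ∀ m n, m ≤ n → X n ⊆ X m := by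
      intro m n hmn
      induction n with
      | zero => rw [Nat.le_zero.mp hmn]
      | succ n ih =>
        rcases Nat.lt_or_ge m (n + 1) with h | h
        · exact (hsub n).trans (ih (by omega))
        · rw [Nat.le_antisymm hmn h]
    refine ray_of_bands (fun n => X n \ X (n + 1)) ?_
      (fun n => D.tail (e n)) (fun n => D.head (e (n + 1))) ?_ ?_ ?_ ?_
    · intro m n hmn
      rcases Nat.lt_or_ge m n with h | h
      · exact Set.disjoint_left.mpr fun x hx hx' => hx.2 (hmono _ _ h hx'.1)
      · have h' : n < m := by omega
        exact Set.disjoint_left.mpr fun x hx hx' => hx'.2 (hmono _ _ h' hx.1)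
    · -- a n = tail (e n) ∈ band n
      intro n
      refine ⟨(hcert n).2.2.1.1, ?_⟩
      rcases dichotomy hF hmin (hcert (n + 1)) (he_mem n) (he_ne n) with h | h
      · exact absurd (hsub n h.2) (hcert n).2.2.1.2
      · exact h.1
    · -- b n = head (e (n+1)) ∈ band n
      intro n
      refine ⟨?_, (hcert (n + 1)).2.2.1.2⟩
      rcases dichotomy hF hmin (hcert n) (he_mem (n + 1)) (Ne.symm (he_ne n)) with h | h
      · exact h.2
      · exact absurd (hsub n (hcert (n + 1)).2.2.1.1) h.1
    · intro n
      exact link hF hmin (hcert (n + 1)) (hcert n) (Ne.symm (he_ne n)) (hsub n)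
    · intro n
      exact adj_symm (adj_of_edge D (e (n + 1)))

end MDAux

namespace MDAux

open MultiDigraph

variable {V E : Type*} {D : MultiDigraph V E}

lemma chain_inter_meets {c : Set (Set E)} (hc : IsChain (· ⊆ ·) c)
    (hne : c.Nonempty) {T : Set E} (hT : T.Finite)
    (h : ∀ F ∈ c, (F ∩ T).Nonempty) : (⋂₀ c ∩ T).Nonempty := by
  classical
  have h𝒯fin : ((fun F => F ∩ T) '' c).Finite :=
    hT.finite_subsets.subset (by rintro _ ⟨F, _, rfl⟩; exact Set.inter_subset_right)
  have h𝒯ne : ((fun F => F ∩ T) '' c).Nonempty := hne.image _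
  obtain ⟨M, hM𝒯, hMmin⟩ := (by
    obtain ⟨M, hM⟩ := h𝒯fin.exists_minimal h𝒯ne
    exact ⟨M, hM.1, fun a' ha' hle => le_antisymm (hM.2 ha' hle) hle⟩ :
    ∃ M ∈ (fun F => F ∩ T) '' c, ∀ a' ∈ (fun F => F ∩ T) '' c, id a' ≤ id M → id M = id a')
  obtain ⟨F₀, hF₀c, hF₀M⟩ := hM𝒯
  have hMle : ∀ F ∈ c, M ⊆ F ∩ T := by
    intro F hFc
    rcases eq_or_ne F F₀ with rfl | hne'
    · exact hF₀M.symm.le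
    · rcases hc hFc hF₀c hne' with hsub | hsub
      · have : F ∩ T ⊆ M := hF₀M ▸ Set.inter_subset_inter_left T hsub
        have := hMmin (F ∩ T) ⟨F, hFc, rfl⟩ this
        have h2 : M = F ∩ T := by simpa using this
        exact h2.le
      · exact hF₀M ▸ Set.inter_subset_inter_left T hsub
  obtain ⟨x, hxF₀, hxT⟩ : (F₀ ∩ T).Nonempty := h F₀ hF₀c
  have hxM : x ∈ M := hF₀M ▸ (⟨hxF₀, hxT⟩ : x ∈ F₀ ∩ T)
  refine ⟨x, ?_, hxT⟩
  exact Set.mem_sInter.mpr fun F hFc => (hMle F hFc hxM).1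

lemma exists_min_fwd (v w : V) {W : Set E} (hW : Fwd D v w W) :
    ∃ F, F ⊆ W ∧ Fwd D v w F ∧ ∀ F' ⊆ F, Fwd D v w F' → F' = F := by
  classical
  set S : Set (Set E) := {F | F ⊆ W ∧ Fwd D v w F} with hS
  have hz := zorn_superset_nonempty S ?_ W ⟨Set.Subset.rfl, hW⟩
  · obtain ⟨F, hFW, hFmin⟩ := hz
    refine ⟨F, hFW, hFmin.1.2, fun F' hF'sub hF' => ?_⟩
    exact (hFmin.eq_of_ge ⟨hF'sub.trans hFmin.1.1, hF'⟩ hF'sub).symm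
  · intro c hcS hchain hcne
    refine ⟨⋂₀ c, ⟨?_, ?_⟩, fun s hs => Set.sInter_subset_of_mem hs⟩
    · obtain ⟨F, hF⟩ := hcne
      exact (Set.sInter_subset_of_mem hF).trans (hcS hF).1
    · intro Xc hsep
      have hT : {g | Lv D g Xc}.Finite :=
        hsep.1.subset (fun g hg => lv_mem_cutEdges hg)
      have hmeet : ∀ F ∈ c, (F ∩ {g | Lv D g Xc}).Nonempty := by
        intro F hF
        obtain ⟨g, hgF, hglv⟩ := (hcS hF).2 Xc hsep
        exact ⟨g, hgF, hglv⟩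
      obtain ⟨g, hg1, hg2⟩ := chain_inter_meets hchain hcne hT hmeet
      exact ⟨g, hg1, hg2⟩

/-- The reversal of a digraph. -/
def rev (D : MultiDigraph V E) : MultiDigraph V E := ⟨D.head, D.tail⟩

lemma rev_cutEdges (X : Set V) : (rev D).cutEdges X = D.cutEdges X := by
  ext e
  simp only [cutEdges, rev, Set.mem_setOf_eq]
  tauto

lemma rev_adj {u u' : V} : (rev D).Adj u u' ↔ D.Adj u u' := by
  simp only [Adj, rev]
  exact exists_congr fun e => by tauto

lemma rev_rayless (h : D.Rayless) : (rev D).Rayless := by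
  rintro ⟨f, hinj, hadj⟩
  exact h ⟨f, hinj, fun n => rev_adj.mp (hadj n)⟩

lemma rev_sep {v w : V} {X : Set V} : Sep (rev D) v w X ↔ Sep D v w X := by
  unfold Sep
  rw [rev_cutEdges]

end MDAux

/-- In a rayless, finitely separable, weakly connected digraph, every
inclusion-minimal witness for `v ∼ w` (for distinct vertices `v`, `w` with
`v ∼ w`) is finite and non-empty. -/
theorem minimal_witness_finite_of_rayless {V E : Type*}
    (D : MultiDigraph V E) (hray : D.Rayless)
    (hsep : D.FinitelySeparable) (hD : D.WeaklyConnected)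
    (v w : V) (hne : v ≠ w) (hvw : D.Sim v w) (W : Set E)
    (hW : D.Witness v w W)
    (hmin : ∀ W' : Set E, W' ⊆ W → D.Witness v w W' → W' = W) :
    W.Finite ∧ W.Nonempty := by
  classical
  have hFwdW : MDAux.Fwd D v w W := by
    intro X hX
    obtain ⟨⟨e, heW, h1, h2⟩, _⟩ := hW X hX.1 hX.2.1 hX.2.2
    exact ⟨e, heW, h1, h2⟩
  have hBwdW : MDAux.Fwd (MDAux.rev D) v w W := by
    intro X hX
    rw [MDAux.rev_sep] at hX
    obtain ⟨_, ⟨e, heW, h1, h2⟩⟩ := hW X hX.1 hX.2.1 hX.2.2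
    exact ⟨e, heW, h2, h1⟩
  obtain ⟨F, hFW, hFfwd, hFmin⟩ := MDAux.exists_min_fwd v w hFwdW
  obtain ⟨B, hBW, hBfwd, hBmin⟩ := MDAux.exists_min_fwd (D := MDAux.rev D) v w hBwdW
  have hunion : F ∪ B = W := by
    apply hmin
    · exact Set.union_subset hFW hBW
    · intro X hfin hv hw
      constructor
      · obtain ⟨g, hg, h1, h2⟩ := hFfwd X ⟨hfin, hv, hw⟩
        exact ⟨g, Or.inl hg, h1, h2⟩
      · obtain ⟨g, hg, h1, h2⟩ := hBfwd X (MDAux.rev_sep.mpr ⟨hfin, hv, hw⟩)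
        exact ⟨g, Or.inr hg, h2, h1⟩
  have hFfin := MDAux.fwd_min_finite hray hFfwd hFmin
  have hBfin := MDAux.fwd_min_finite (MDAux.rev_rayless hray) hBfwd hBmin
  constructor
  · rw [← hunion]
    exact hFfin.union hBfin
  · obtain ⟨X, h1, h2, h3⟩ := hsep v w hne
    obtain ⟨⟨g, hg, _⟩, _⟩ := hW X h1 h2 h3
    exact ⟨g, hg⟩
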